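/- Let (Y,λ) be a non-atomic measure space and let A, B be measurable subsets. Then A ⊆ B modulo null sets if and only if G_A ≤ G_B, where G_A is the group of measure-preserving finite-support transformations supported (mod null sets) in A. -/

import Mathlib

open MeasureTheory ENNReal Set Function Filter ProbabilityTheory

noncomputable section Stmt6Aux

/-- reflection invariance of Lebesgue on (0,1] -/
lemma stmt6_map_refl :
    Measure.map (fun s : ℝ => 1 - s) (volume.restrict (Set.Ioc (0:ℝ) 1))
      = volume.restrict (Set.Ioc (0:ℝ) 1) := by
  have hmeas : Measurable (fun s : ℝ => 1 - s) := measurable_const.sub measurable_id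
  have hpre : (fun s : ℝ => 1 - s) ⁻¹' (Set.Ico (0:ℝ) 1) = Set.Ioc (0:ℝ) 1 := by
    ext x
    simp only [Set.mem_preimage, Set.mem_Ico, Set.mem_Ioc]
    constructor <;> intro h <;> constructor <;> linarith [h.1, h.2]
  have hvol : Measure.map (fun s : ℝ => 1 - s) (volume : Measure ℝ) = volume := by
    have h1 : (fun s : ℝ => 1 - s) = (fun s : ℝ => s + 1) ∘ Neg.neg := by
      funext s; simp [sub_eq_add_neg, add_comm]
    rw [h1, ← Measure.map_map (measurable_add_const 1) measurable_neg,
      Measure.map_neg_eq_self, map_add_right_eq_self]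
  calc Measure.map (fun s : ℝ => 1 - s) (volume.restrict (Set.Ioc (0:ℝ) 1))
      = Measure.map (fun s : ℝ => 1 - s)
          (volume.restrict ((fun s : ℝ => 1 - s) ⁻¹' (Set.Ico (0:ℝ) 1))) := by rw [hpre]
    _ = (Measure.map (fun s : ℝ => 1 - s) volume).restrict (Set.Ico (0:ℝ) 1) :=
        (Measure.restrict_map hmeas measurableSet_Ico).symm
    _ = volume.restrict (Set.Ico (0:ℝ) 1) := by rw [hvol]
    _ = volume.restrict (Set.Ioc (0:ℝ) 1) :=
        Measure.restrict_congr_set (Ico_ae_eq_Ioc)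

variable (μ : Measure ℝ) [IsProbabilityMeasure μ] [NullSingletonClass μ]

lemma stmt6_cdf_continuous : Continuous (cdf μ) := by
  rw [continuous_iff_continuousAt]
  intro x
  have hmono : Monotone (cdf μ) := (cdf μ).mono
  rw [hmono.continuousAt_iff_leftLim_eq_rightLim, (cdf μ).rightLim_eq]
  have h1 : μ {x} = 0 := measure_singleton x
  rw [← measure_cdf μ, (cdf μ).measure_singleton, ofReal_eq_zero] at h1
  have h2 : leftLim (cdf μ) x ≤ cdf μ x := hmono.leftLim_le le_rfl
  linarith

lemma stmt6_map_cdf : Measure.map (cdf μ) μ = volume.restrict (Set.Ioc (0:ℝ) 1) := by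
  have hcont := stmt6_cdf_continuous μ
  refine Measure.ext_of_Iic _ _ (fun t => ?_)
  rw [Measure.map_apply hcont.measurable measurableSet_Iic,
    Measure.restrict_apply measurableSet_Iic]
  rcases lt_or_ge t 0 with ht | ht
  · have h1 : (cdf μ) ⁻¹' Set.Iic t = ∅ := by
      ext x; simp only [Set.mem_preimage, Set.mem_Iic, Set.mem_empty_iff_false, iff_false, not_le]
      exact lt_of_lt_of_le ht (cdf_nonneg μ x)
    have h2 : Set.Iic t ∩ Set.Ioc (0:ℝ) 1 = ∅ := by
      ext x; simp only [Set.mem_inter_iff, Set.mem_Iic, Set.mem_Ioc, Set.mem_empty_iff_false,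
        iff_false, not_and]
      intro hx h h'; linarith
    rw [h1, h2]; simp
  rcases le_or_gt 1 t with ht1 | ht1
  · have h1 : (cdf μ) ⁻¹' Set.Iic t = Set.univ := by
      ext x; simp only [Set.mem_preimage, Set.mem_Iic, Set.mem_univ, iff_true]
      exact le_trans (cdf_le_one μ x) ht1
    have h2 : Set.Iic t ∩ Set.Ioc (0:ℝ) 1 = Set.Ioc (0:ℝ) 1 := by
      rw [Set.inter_eq_right]
      intro x hx; exact le_trans hx.2 ht1
    rw [h1, h2, measure_univ, Real.volume_Ioc]
    norm_num
  · -- 0 ≤ t < 1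
    have h2 : Set.Iic t ∩ Set.Ioc (0:ℝ) 1 = Set.Ioc 0 t := by
      ext x; simp only [Set.mem_inter_iff, Set.mem_Iic, Set.mem_Ioc]
      constructor
      · rintro ⟨h1, h2, h3⟩; exact ⟨h2, h1⟩
      · rintro ⟨h1, h2'⟩; exact ⟨h2', h1, le_trans h2' (le_of_lt ht1)⟩
    rw [h2, Real.volume_Ioc]
    rcases Set.eq_empty_or_nonempty ((cdf μ) ⁻¹' Set.Iic t) with he | hne
    · -- empty: then t = 0
      have ht0 : t = 0 := by
        by_contra h
        have ht' : 0 < t := lt_of_le_of_ne ht (Ne.symm h)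
        have := tendsto_cdf_atBot μ
        have h3 : ∀ᶠ x : ℝ in atBot, cdf μ x < t := this.eventually_lt_const ht'
        obtain ⟨x, hx⟩ := h3.exists
        have : x ∈ (cdf μ) ⁻¹' Set.Iic t := le_of_lt hx
        rw [he] at this; exact this
      rw [he, ht0]
      simp
    · have hbdd : BddAbove ((cdf μ) ⁻¹' Set.Iic t) := by
        have := tendsto_cdf_atTop μ
        have h3 : ∀ᶠ x : ℝ in atTop, t < cdf μ x := this.eventually_const_lt ht1
        obtain ⟨x0, hx0⟩ := eventually_atTop.1 h3
        refine ⟨x0, fun x hx => ?_⟩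
        by_contra h
        push_neg at h
        exact absurd (Set.mem_preimage.1 hx) (not_le.2 (hx0 x (le_of_lt h)))
      have hclosed : IsClosed ((cdf μ) ⁻¹' Set.Iic t) := isClosed_Iic.preimage hcont
      set c := sSup ((cdf μ) ⁻¹' Set.Iic t) with hc
      have hcmem : c ∈ (cdf μ) ⁻¹' Set.Iic t := hclosed.csSup_mem hne hbdd
      have hFc : cdf μ c ≤ t := hcmem
      have hIic : (cdf μ) ⁻¹' Set.Iic t = Set.Iic c := by
        ext x
        simp only [Set.mem_preimage, Set.mem_Iic]
        constructor
        · intro hx; exact le_csSup hbdd hx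
        · intro hx; exact le_trans ((cdf μ).mono hx) hFc
      have hFceq : cdf μ c = t := by
        by_contra h
        have hlt : cdf μ c < t := lt_of_le_of_ne hFc h
        have h3 : ∀ᶠ x in nhds c, cdf μ x < t :=
          (hcont.continuousAt (x := c)).eventually_lt_const hlt
        have h4 : ∀ᶠ x in nhdsWithin c (Set.Ioi c), cdf μ x < t :=
          eventually_nhdsWithin_of_eventually_nhds h3
        obtain ⟨y, hy1, hy2⟩ := (h4.and self_mem_nhdsWithin).exists
        have : y ≤ c := le_csSup hbdd (le_of_lt hy1)
        exact absurd hy2 (not_lt.2 this)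
      have hμ : μ (Set.Iic c) = ENNReal.ofReal (cdf μ c) := by
        conv_lhs => rw [← measure_cdf μ]
        rw [(cdf μ).measure_Iic (tendsto_cdf_atBot μ)]
        simp
      rw [hIic, hμ, hFceq, sub_zero]

def stmt6V (μ : Measure ℝ) : Set ℝ := {x | ∀ y, cdf μ y = cdf μ x → y = x}

lemma stmt6V_compl_eq :
    (stmt6V μ)ᶜ = ⋃ q : ℚ, ((cdf μ) ⁻¹' {cdf μ (q : ℝ)} \ {(q : ℝ)}) := by
  ext x
  simp only [stmt6V, Set.mem_compl_iff, Set.mem_setOf_eq, not_forall, Set.mem_iUnion,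
    Set.mem_diff, Set.mem_preimage, Set.mem_singleton_iff]
  constructor
  · rintro ⟨y, hy, hne⟩
    rcases lt_or_gt_of_ne hne with h | h
    · -- y < x
      obtain ⟨q, hq1, hq2⟩ := exists_rat_btwn h
      refine ⟨q, ?_, fun h' => by rw [h'] at hq2; exact lt_irrefl _ hq2⟩
      have h1 : cdf μ y ≤ cdf μ q := (cdf μ).mono hq1.le
      have h2 : cdf μ (q:ℝ) ≤ cdf μ x := (cdf μ).mono hq2.le
      rw [hy] at h1
      exact le_antisymm h1 h2
    · obtain ⟨q, hq1, hq2⟩ := exists_rat_btwn h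
      refine ⟨q, ?_, fun h' => by rw [h'] at hq1; exact lt_irrefl _ hq1⟩
      have h1 : cdf μ x ≤ cdf μ q := (cdf μ).mono hq1.le
      have h2 : cdf μ (q:ℝ) ≤ cdf μ y := (cdf μ).mono hq2.le
      rw [hy] at h2
      exact le_antisymm h1 h2
  · rintro ⟨q, hq, hne⟩
    exact ⟨q, hq.symm, fun h => hne h.symm⟩

lemma stmt6V_meas : MeasurableSet (stmt6V μ) := by
  rw [← compl_compl (stmt6V μ), stmt6V_compl_eq]
  have hF : Measurable (cdf μ) := (stmt6_cdf_continuous μ).measurable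
  exact (MeasurableSet.iUnion fun q =>
    ((hF (measurableSet_singleton _)).diff (measurableSet_singleton _))).compl

lemma stmt6V_compl_null : μ (stmt6V μ)ᶜ = 0 := by
  rw [stmt6V_compl_eq]
  refine measure_iUnion_null fun q => measure_mono_null Set.diff_subset ?_
  have hF : Measurable (cdf μ) := (stmt6_cdf_continuous μ).measurable
  have h1 : μ ((cdf μ) ⁻¹' {cdf μ (q:ℝ)}) =
      (volume.restrict (Set.Ioc (0:ℝ) 1)) {cdf μ (q:ℝ)} := by
    rw [← stmt6_map_cdf μ, Measure.map_apply hF (measurableSet_singleton _)]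
  rw [h1, Measure.restrict_apply (measurableSet_singleton _)]
  exact measure_mono_null Set.inter_subset_left (measure_singleton _)

theorem stmt6_exists_involution (ν : Measure ℝ) [NullSingletonClass ν] (S : Set ℝ)
    (hS : MeasurableSet S) (h0 : ν S ≠ 0) (hfin : ν S ≠ ⊤) :
    ∃ T : ℝ ≃ᵐ ℝ, MeasurePreserving T ν ν ∧ {x | T x ≠ x} ⊆ S ∧ ν {x | T x ≠ x} = ν S := by
  classical
  set μ : Measure ℝ := (ν S)⁻¹ • ν.restrict S with hμdef
  have hμapp : ∀ X : Set ℝ, MeasurableSet X → μ X = (ν S)⁻¹ * ν (X ∩ S) := by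
    intro X hX
    rw [hμdef]
    simp [Measure.restrict_apply hX]
  haveI : IsProbabilityMeasure μ := by
    constructor
    rw [hμapp _ MeasurableSet.univ, Set.univ_inter, ENNReal.inv_mul_cancel h0 hfin]
  haveI : NullSingletonClass μ := by
    constructor
    intro x
    rw [hμapp _ (measurableSet_singleton x)]
    have : ν ({x} ∩ S) = 0 := measure_mono_null Set.inter_subset_left (measure_singleton x)
    rw [this, mul_zero]
  have hμν : ∀ X : Set ℝ, MeasurableSet X → X ⊆ S → ν X = ν S * μ X := by
    intro X hX hXS
    rw [hμapp X hX, Set.inter_eq_self_of_subset_left hXS, ← mul_assoc,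
      ENNReal.mul_inv_cancel h0 hfin, one_mul]
  set F : ℝ → ℝ := fun x => cdf μ x with hFdef
  have hFcont : Continuous F := stmt6_cdf_continuous μ
  have hFmeas : Measurable F := hFcont.measurable
  have hFmono : Monotone F := (cdf μ).mono
  set L : Measure ℝ := volume.restrict (Set.Ioc (0:ℝ) 1) with hLdef
  have hmap : Measure.map F μ = L := stmt6_map_cdf μ
  set r : ℝ → ℝ := fun s => 1 - s with hrdef
  have hrmeas : Measurable r := measurable_const.sub measurable_id
  have hrr : ∀ s, r (r s) = s := fun s => by simp [hrdef]
  have hrL : Measure.map r L = L := stmt6_map_refl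
  set V : Set ℝ := stmt6V μ with hVdef
  have hVmeas : MeasurableSet V := stmt6V_meas μ
  have hVc : μ Vᶜ = 0 := stmt6V_compl_null μ
  have hVprop : ∀ x ∈ V, ∀ y, F y = F x → y = x := fun x hx => hx
  have hinjV : Set.InjOn F V := fun a ha b _ hab => (hVprop a ha b hab.symm).symm
  have himg : ∀ X : Set ℝ, MeasurableSet X → X ⊆ V → MeasurableSet (F '' X) := by
    intro X hX hXV
    exact hX.image_of_continuousOn_injOn hFcont.continuousOn (hinjV.mono hXV)
  -- the measure identity
  have hIm : ∀ X : Set ℝ, MeasurableSet X → X ⊆ V → μ X = L (F '' X) := by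
    intro X hX hXV
    have h1 : MeasurableSet (F '' X) := himg X hX hXV
    have h2 : μ (F ⁻¹' (F '' X)) = L (F '' X) := by
      rw [← hmap, Measure.map_apply hFmeas h1]
    have h3 : F ⁻¹' (F '' X) \ X ⊆ Vᶜ := by
      rintro x ⟨hx1, hx2⟩
      obtain ⟨x', hx', hFx'⟩ := hx1
      intro hxV
      exact hx2 (hVprop x hxV x' hFx' ▸ hx')
    refine le_antisymm (h2 ▸ measure_mono (Set.subset_preimage_image F X)) ?_
    rw [← h2]
    calc μ (F ⁻¹' (F '' X)) ≤ μ X + μ (F ⁻¹' (F '' X) \ X) := by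
          have := measure_inter_add_diff (μ := μ) (F ⁻¹' (F '' X)) hX
          rw [← this]
          gcongr
          · exact Set.inter_subset_right
      _ ≤ μ X + μ Vᶜ := by gcongr
      _ = μ X := by rw [hVc, add_zero]
  set B₀ : Set ℝ := F '' V with hB₀def
  have hB₀meas : MeasurableSet B₀ := himg V hVmeas subset_rfl
  set B₁ : Set ℝ := B₀ ∩ r ⁻¹' B₀ with hB₁def
  have hB₁meas : MeasurableSet B₁ := hB₀meas.inter (hrmeas hB₀meas)
  have hrB₁ : r ⁻¹' B₁ = B₁ := by
    ext s
    simp only [hB₁def, Set.mem_preimage, Set.mem_inter_iff, hrr s]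
    tauto
  set W₁ : Set ℝ := V ∩ F ⁻¹' B₁ with hW₁def
  have hW₁meas : MeasurableSet W₁ := hVmeas.inter (hFmeas hB₁meas)
  have hW₁V : W₁ ⊆ V := Set.inter_subset_left
  set g : ℝ → ℝ := fun x => Function.invFunOn F V (r (F x)) with hgdef
  have hgspec : ∀ x ∈ W₁, g x ∈ V ∧ F (g x) = r (F x) := by
    intro x hx
    have h1 : r (F x) ∈ B₁ := by
      rw [← hrB₁]; exact Set.mem_preimage.2 (by rw [hrr]; exact hx.2)
    have h2 : r (F x) ∈ B₀ := h1.1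
    exact ⟨Function.invFunOn_mem h2, Function.invFunOn_eq h2⟩
  have hgW₁ : ∀ x ∈ W₁, g x ∈ W₁ := by
    intro x hx
    obtain ⟨h1, h2⟩ := hgspec x hx
    refine ⟨h1, ?_⟩
    have h3 : r (F x) ∈ B₁ := by
      rw [← hrB₁]; exact Set.mem_preimage.2 (by rw [hrr]; exact hx.2)
    rw [Set.mem_preimage, h2]; exact h3
  have hgg : ∀ x ∈ W₁, g (g x) = x := by
    intro x hx
    obtain ⟨h1, h2⟩ := hgspec x hx
    obtain ⟨h3, h4⟩ := hgspec (g x) (hgW₁ x hx)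
    have h5 : F (g (g x)) = F x := by rw [h4, h2, hrr]
    exact (hVprop (g (g x)) h3 x h5.symm).symm
  -- key membership characterization
  have hkey : ∀ x ∈ W₁, ∀ X : Set ℝ, X ⊆ V → (g x ∈ X ↔ r (F x) ∈ F '' X) := by
    intro x hx X hXV
    obtain ⟨h1, h2⟩ := hgspec x hx
    constructor
    · intro h; exact ⟨g x, h, h2⟩
    · rintro ⟨v, hv, hFv⟩
      have : v = g x := hVprop (g x) h1 v (by rw [hFv, h2])
      rwa [← this]
  have hWsub : ∀ X : Set ℝ, X ⊆ V → W₁ ∩ g ⁻¹' X = W₁ ∩ (fun x => r (F x)) ⁻¹' (F '' X) := by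
    intro X hXV
    ext x
    simp only [Set.mem_inter_iff, Set.mem_preimage]
    constructor
    · rintro ⟨h1, h2⟩; exact ⟨h1, (hkey x h1 X hXV).1 h2⟩
    · rintro ⟨h1, h2⟩; exact ⟨h1, (hkey x h1 X hXV).2 h2⟩
  have hLE : ∀ X : Set ℝ, MeasurableSet X → X ⊆ V → μ (W₁ ∩ g ⁻¹' X) ≤ μ X := by
    intro X hX hXV
    rw [hWsub X hXV]
    have h1 : MeasurableSet (F '' X) := himg X hX hXV
    calc μ (W₁ ∩ (fun x => r (F x)) ⁻¹' (F '' X))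
        ≤ μ ((fun x => r (F x)) ⁻¹' (F '' X)) := measure_mono Set.inter_subset_right
      _ = μ (F ⁻¹' (r ⁻¹' (F '' X))) := rfl
      _ = L (r ⁻¹' (F '' X)) := by rw [← hmap, Measure.map_apply hFmeas (hrmeas h1)]
      _ = L (F '' X) := by rw [← Measure.map_apply hrmeas h1, hrL]
      _ = μ X := (hIm X hX hXV).symm
  -- the support set
  set W : Set ℝ := (W₁ ∩ S) ∩ (fun x => r (F x)) ⁻¹' (F '' (S ∩ W₁)) with hWdef
  have hSW₁V : S ∩ W₁ ⊆ V := Set.inter_subset_right.trans hW₁V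
  have hSW₁meas : MeasurableSet (S ∩ W₁) := hS.inter hW₁meas
  have hWmeas : MeasurableSet W :=
    (hW₁meas.inter hS).inter ((hrmeas.comp hFmeas) (himg _ hSW₁meas hSW₁V))
  have hWmem : ∀ x, x ∈ W ↔ x ∈ W₁ ∧ x ∈ S ∧ g x ∈ S := by
    intro x
    constructor
    · rintro ⟨⟨h1, h2⟩, h3⟩
      refine ⟨h1, h2, ?_⟩
      have := (hkey x h1 (S ∩ W₁) hSW₁V).2 h3
      exact this.1
    · rintro ⟨h1, h2, h3⟩
      exact ⟨⟨h1, h2⟩, (hkey x h1 (S ∩ W₁) hSW₁V).1 ⟨h3, hgW₁ x h1⟩⟩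
  have hWW₁ : W ⊆ W₁ := fun x hx => ((hWmem x).1 hx).1
  have hWS : W ⊆ S := fun x hx => ((hWmem x).1 hx).2.1
  have hWW : ∀ x ∈ W, g x ∈ W := by
    intro x hx
    obtain ⟨h1, h2, h3⟩ := (hWmem x).1 hx
    exact (hWmem (g x)).2 ⟨hgW₁ x h1, h3, by rw [hgg x h1]; exact h2⟩
  -- the transformation
  set T : ℝ → ℝ := fun x => if x ∈ W then g x else x with hTdef
  have hTW : ∀ x ∈ W, T x = g x := fun x hx => if_pos hx
  have hTnW : ∀ x ∉ W, T x = x := fun x hx => if_neg hx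
  have hTinv : ∀ x, T (T x) = x := by
    intro x
    by_cases hx : x ∈ W
    · rw [hTW x hx, hTW _ (hWW x hx), hgg x (hWW₁ hx)]
    · rw [hTnW x hx, hTnW x hx]
  have hTpre : ∀ E : Set ℝ,
      T ⁻¹' E = (W ∩ (fun x => r (F x)) ⁻¹' (F '' (E ∩ W))) ∪ (E \ W) := by
    intro E
    have hEWV : E ∩ W ⊆ V := Set.inter_subset_right.trans (hWW₁.trans hW₁V)
    ext x
    rw [Set.mem_union, Set.mem_preimage]
    by_cases hx : x ∈ W
    · rw [hTW x hx]
      constructor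
      · intro h
        exact Or.inl ⟨hx, Set.mem_preimage.2
          ((hkey x (hWW₁ hx) (E ∩ W) hEWV).1 ⟨h, hWW x hx⟩)⟩
      · rintro (⟨h1, h2⟩ | ⟨h1, h2⟩)
        · exact ((hkey x (hWW₁ hx) (E ∩ W) hEWV).2 (Set.mem_preimage.1 h2)).1
        · exact absurd hx h2
    · rw [hTnW x hx]
      constructor
      · intro h; exact Or.inr ⟨h, hx⟩
      · rintro (⟨h1, _⟩ | ⟨h1, _⟩)
        · exact absurd h1 hx
        · exact h1
  have hTmeas : Measurable T := by
    intro E hE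
    rw [hTpre E]
    have h1 : MeasurableSet (E ∩ W) := hE.inter hWmeas
    have h2 : MeasurableSet (F '' (E ∩ W)) :=
      himg _ h1 (Set.inter_subset_right.trans (hWW₁.trans hW₁V))
    exact (hWmeas.inter ((hrmeas.comp hFmeas) h2)).union (hE.diff hWmeas)
  -- measure preservation
  have hpre_eq : ∀ E : Set ℝ, MeasurableSet E →
      W ∩ (fun x => r (F x)) ⁻¹' (F '' (E ∩ W)) = W ∩ g ⁻¹' (E ∩ W) := by
    intro E hE
    have hEWV : E ∩ W ⊆ V := Set.inter_subset_right.trans (hWW₁.trans hW₁V)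
    ext x
    simp only [Set.mem_inter_iff, Set.mem_preimage]
    constructor
    · rintro ⟨h1, h2⟩; exact ⟨h1, (hkey x (hWW₁ h1) _ hEWV).2 h2⟩
    · rintro ⟨h1, h2⟩; exact ⟨h1, (hkey x (hWW₁ h1) _ hEWV).1 h2⟩
  have hMP : ∀ E : Set ℝ, MeasurableSet E → ν (T ⁻¹' E) = ν E := by
    intro E hE
    have hEWV : E ∩ W ⊆ V := Set.inter_subset_right.trans (hWW₁.trans hW₁V)
    have hEW : MeasurableSet (E ∩ W) := hE.inter hWmeas
    set P : Set ℝ := W ∩ g ⁻¹' (E ∩ W) with hPdef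
    have hPmeas : MeasurableSet P := by
      rw [hPdef, ← hpre_eq E hE]
      exact hWmeas.inter ((hrmeas.comp hFmeas) (himg _ hEW hEWV))
    have hPW : P ⊆ W := Set.inter_subset_left
    have hPV : P ⊆ V := hPW.trans (hWW₁.trans hW₁V)
    -- μ P = μ (E ∩ W)
    have hμP : μ P = μ (E ∩ W) := by
      refine le_antisymm ?_ ?_
      · calc μ P ≤ μ (W₁ ∩ g ⁻¹' (E ∩ W)) :=
              measure_mono (Set.inter_subset_inter_left _ hWW₁)
          _ ≤ μ (E ∩ W) := hLE _ hEW hEWV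
      · have hEWP : E ∩ W = W ∩ g ⁻¹' P := by
          ext x
          simp only [Set.mem_inter_iff, Set.mem_preimage, hPdef]
          constructor
          · rintro ⟨h1, h2⟩
            exact ⟨h2, hWW x h2, by rw [hgg x (hWW₁ h2)]; exact ⟨h1, h2⟩⟩
          · rintro ⟨h1, h2, h3⟩
            exact ⟨(by rw [hgg x (hWW₁ h1)] at h3; exact h3.1), h1⟩
        calc μ (E ∩ W) = μ (W ∩ g ⁻¹' P) := by rw [hEWP]
          _ ≤ μ (W₁ ∩ g ⁻¹' P) := measure_mono (Set.inter_subset_inter_left _ hWW₁)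
          _ ≤ μ P := hLE _ hPmeas hPV
    have hνP : ν P = ν (E ∩ W) := by
      rw [hμν P hPmeas (hPW.trans hWS), hμν (E ∩ W) hEW (Set.inter_subset_right.trans hWS), hμP]
    rw [hTpre E, hpre_eq E hE]
    have hdisj : Disjoint P (E \ W) :=
      Set.disjoint_left.2 fun x hx1 hx2 => hx2.2 (hPW hx1)
    rw [measure_union hdisj (hE.diff hWmeas), hνP, measure_inter_add_diff E hWmeas]
  -- null complement of W w.r.t. μ
  have hμS : μ Sᶜ = 0 := by
    rw [hμapp _ hS.compl]
    simp
  have hW₁c : μ W₁ᶜ = 0 := by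
    have h1 : W₁ᶜ ⊆ Vᶜ ∪ F ⁻¹' B₁ᶜ := by
      intro x hx
      rw [Set.mem_compl_iff, hW₁def, Set.mem_inter_iff] at hx
      push_neg at hx
      by_cases h2 : x ∈ V
      · exact Or.inr (hx h2)
      · exact Or.inl h2
    have hμV : μ V = 1 := by
      have h2 := measure_add_measure_compl (μ := μ) hVmeas
      rw [hVc, add_zero, measure_univ] at h2
      exact h2
    have hLB₀ : L B₀ = 1 := by rw [← hIm V hVmeas subset_rfl, hμV]
    have hLuniv : L Set.univ = 1 := by
      rw [hLdef, Measure.restrict_apply MeasurableSet.univ, Set.univ_inter, Real.volume_Ioc]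
      norm_num
    have hLB₀c : L B₀ᶜ = 0 := by
      have h3 := measure_add_measure_compl (μ := L) hB₀meas
      rw [hLB₀, hLuniv] at h3
      have h4 : (1:ℝ≥0∞) + L B₀ᶜ = 1 + 0 := by rw [add_zero]; exact h3
      exact (ENNReal.add_right_inj one_ne_top).1 h4
    have hLB₁c : L B₁ᶜ = 0 := by
      have h6 : B₁ᶜ = B₀ᶜ ∪ r ⁻¹' B₀ᶜ := by
        rw [hB₁def]
        ext s
        simp only [Set.mem_compl_iff, Set.mem_inter_iff, Set.mem_union, Set.mem_preimage]
        tauto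
      rw [h6]
      refine measure_union_null hLB₀c ?_
      have h7 : L (r ⁻¹' B₀ᶜ) = L B₀ᶜ := by
        rw [← Measure.map_apply hrmeas hB₀meas.compl, hrL]
      rw [h7, hLB₀c]
    refine measure_mono_null h1 (measure_union_null hVc ?_)
    rw [← Measure.map_apply hFmeas hB₁meas.compl, hmap, hLB₁c]
  have hWc : μ Wᶜ = 0 := by
    have h1 : Wᶜ ⊆ W₁ᶜ ∪ Sᶜ ∪ (W₁ ∩ g ⁻¹' (Sᶜ ∩ W₁)) := by
      intro x hx
      rw [Set.mem_compl_iff, hWmem x] at hx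
      push_neg at hx
      by_cases h2 : x ∈ W₁
      · by_cases h3 : x ∈ S
        · exact Or.inr ⟨h2, Set.mem_preimage.2 ⟨hx h2 h3, hgW₁ x h2⟩⟩
        · exact Or.inl (Or.inr h3)
      · exact Or.inl (Or.inl h2)
    refine measure_mono_null h1 (measure_union_null (measure_union_null hW₁c hμS) ?_)
    refine le_antisymm (le_trans (hLE _ (hS.compl.inter hW₁meas)
      (Set.inter_subset_right.trans hW₁V)) ?_) zero_le
    exact le_of_eq (measure_mono_null Set.inter_subset_left hμS)
  have hμW : μ W = 1 := by
    have h2 := measure_add_measure_compl (μ := μ) hWmeas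
    rw [hWc, add_zero, measure_univ] at h2
    exact h2
  -- the support of T
  set D : Set ℝ := {x | T x ≠ x} with hDdef
  have hDW : D ⊆ W := fun x hx => by
    by_contra h
    exact hx (hTnW x h)
  have hDS : D ⊆ S := hDW.trans hWS
  have hDmeas : MeasurableSet D := by
    have h1 : D = {x | T x = x}ᶜ := by ext x; simp [hDdef]
    rw [h1]
    exact (measurableSet_eq_fun hTmeas measurable_id).compl
  have hDc : μ Dᶜ = 0 := by
    have h1 : Dᶜ ⊆ Wᶜ ∪ F ⁻¹' {(1:ℝ)/2} := by
      intro x hx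
      rw [Set.mem_compl_iff, hDdef, Set.mem_setOf_eq, not_not] at hx
      by_cases h2 : x ∈ W
      · refine Or.inr ?_
        have h3 : g x = x := by rw [← hTW x h2, hx]
        have h4 : F (g x) = r (F x) := (hgspec x (hWW₁ h2)).2
        rw [h3] at h4
        have h5 : F x = 1 - F x := h4
        rw [Set.mem_preimage, Set.mem_singleton_iff]
        linarith
      · exact Or.inl h2
    refine measure_mono_null h1 (measure_union_null hWc ?_)
    rw [← Measure.map_apply hFmeas (measurableSet_singleton _), hmap, hLdef,
      Measure.restrict_apply (measurableSet_singleton _)]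
    exact measure_mono_null Set.inter_subset_left (measure_singleton _)
  have hμD : μ D = 1 := by
    have h2 := measure_add_measure_compl (μ := μ) hDmeas
    rw [hDc, add_zero, measure_univ] at h2
    exact h2
  have hνD : ν D = ν S := by
    rw [hμν D hDmeas hDS, hμD, mul_one]
  -- assemble the measurable equivalence
  set Teq : ℝ ≃ᵐ ℝ := ⟨⟨T, T, hTinv, hTinv⟩, hTmeas, hTmeas⟩ with hTeqdef
  refine ⟨Teq, ⟨Teq.measurable, ?_⟩, hDS, hνD⟩
  refine Measure.ext fun E hE => ?_
  rw [Measure.map_apply Teq.measurable hE]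
  exact hMP E hE

end Stmt6Aux

/-- For a non-atomic σ-finite standard space, `A ⊆ B` modulo null sets if and only if
`G_A ≤ G_B`, where `G_A` is the set of finite-measure-support measure-preserving
transformations supported (mod null) in `A`. -/
theorem stmt_6 {Y : Type*} [MeasurableSpace Y] [StandardBorelSpace Y]
    (lam : Measure Y) [SigmaFinite lam] [NullSingletonClass lam]
    (A B : Set Y) (hA : MeasurableSet A) (hB : MeasurableSet B) :
    lam (A \ B) = 0 ↔
      ∀ T : Y ≃ᵐ Y, MeasurePreserving T lam lam → lam {y | T y ≠ y} < ⊤ →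
        lam ({y | T y ≠ y} \ A) = 0 → lam ({y | T y ≠ y} \ B) = 0 := by
  constructor
  · intro hAB T hT hfin hTA
    refine measure_mono_null (fun y hy => ?_) (measure_union_null hTA hAB)
    by_cases hyA : y ∈ A
    · exact Or.inr ⟨hyA, hy.2⟩
    · exact Or.inl ⟨hy.1, hyA⟩
  · intro h
    by_contra hne
    have hpos : 0 < lam (A \ B) := pos_iff_ne_zero.2 hne
    obtain ⟨S, hSmeas, hSsub, hSpos, hSfin⟩ :=
      MeasureTheory.Measure.exists_subset_measure_lt_top (hA.diff hB) hpos
    have hYnc : ¬Countable Y := by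
      intro hc
      exact hSpos.ne' ((Set.to_countable S).measure_zero lam)
    let e : Y ≃ᵐ ℝ := PolishSpace.measurableEquivOfNotCountable hYnc (not_countable (α := ℝ))
    set ν : Measure ℝ := Measure.map e lam with hνdef
    haveI : NullSingletonClass ν := by
      constructor
      intro x
      rw [hνdef, Measure.map_apply e.measurable (measurableSet_singleton x)]
      have h1 : e ⁻¹' {x} = {e.symm x} := by
        ext y
        simp only [Set.mem_preimage, Set.mem_singleton_iff]
        exact ⟨fun h' => by rw [← h', e.symm_apply_apply], fun h' => by rw [h', e.apply_symm_apply]⟩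
      rw [h1]
      exact measure_singleton _
    set SR : Set ℝ := e.symm ⁻¹' S with hSRdef
    have hSRmeas : MeasurableSet SR := e.symm.measurable hSmeas
    have hpre : e ⁻¹' SR = S := by
      ext y
      simp only [hSRdef, Set.mem_preimage, MeasurableEquiv.symm_apply_apply]
    have hνSR : ν SR = lam S := by
      rw [hνdef, Measure.map_apply e.measurable hSRmeas, hpre]
    obtain ⟨TR, hMPR, hsubR, hvalR⟩ := stmt6_exists_involution ν SR hSRmeas
      (by rw [hνSR]; exact hSpos.ne') (by rw [hνSR]; exact hSfin.ne)
    set TY : Y ≃ᵐ Y := e.trans (TR.trans e.symm) with hTYdef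
    have hMPe : MeasurePreserving e lam ν := ⟨e.measurable, rfl⟩
    have hMPY : MeasurePreserving TY lam lam :=
      ((hMPe.symm e).comp (hMPR.comp hMPe) : _)
    set DR : Set ℝ := {x | TR x ≠ x} with hDRdef
    have hDRmeas : MeasurableSet DR := by
      have h1 : DR = {x | TR x = x}ᶜ := by ext x; simp [hDRdef]
      rw [h1]
      exact (measurableSet_eq_fun TR.measurable measurable_id).compl
    have hDY : {y | TY y ≠ y} = e ⁻¹' DR := by
      ext y
      simp only [Set.mem_setOf_eq, Set.mem_preimage, hDRdef]
      constructor
      · intro hne' hEq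
        exact hne' (by show e.symm (TR (e y)) = y; rw [hEq, e.symm_apply_apply])
      · intro hne' hEq
        refine hne' ?_
        have h2 := congrArg e hEq
        rwa [show e (TY y) = TR (e y) from by
          show e (e.symm (TR (e y))) = TR (e y); rw [e.apply_symm_apply]] at h2
    have hlamDY : lam {y | TY y ≠ y} = ν DR := by
      rw [hDY, hνdef, Measure.map_apply e.measurable hDRmeas]
    have hDYS : {y | TY y ≠ y} ⊆ S := by
      rw [hDY, ← hpre]
      exact Set.preimage_mono hsubR
    have hfinY : lam {y | TY y ≠ y} < ⊤ := by
      rw [hlamDY, hvalR, hνSR]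
      exact hSfin
    have hTA : lam ({y | TY y ≠ y} \ A) = 0 := by
      have h1 : {y | TY y ≠ y} \ A = ∅ :=
        Set.diff_eq_empty.2 (hDYS.trans (hSsub.trans Set.diff_subset))
      rw [h1, measure_empty]
    have hTB := h TY hMPY hfinY hTA
    have h2 : {y | TY y ≠ y} \ B = {y | TY y ≠ y} := by
      ext y
      simp only [Set.mem_diff, Set.mem_setOf_eq, and_iff_left_iff_imp]
      intro hy hyB
      exact (hSsub (hDYS hy)).2 hyB
    rw [h2, hlamDY, hvalR, hνSR] at hTB
    exact hSpos.ne' hTB
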